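/- Let E be a real inner product space and let μ : E → ℝ be convex and positively homogeneous. Suppose ξ₀, ξ₁ ∈ E with ‖ξ₀‖ = ‖ξ₁‖ = 1 both attain the infimum m of μ over the unit sphere, and m < 0. Then ξ₀ = ξ₁. That is, when the minimal asymptotic slope is negative, the minimizing unit direction is unique. -/

import Mathlib

/-- **Uniqueness of the maximally destabilizing direction.** Let `μ` be a
convex, positively homogeneous function on a real inner product space.  If two
unit vectors `ξ₀, ξ₁` both attain the infimum `m` of `μ` over the unit sphere
and `m < 0`, then `ξ₀ = ξ₁`. -/
theorem destabilizing_direction_unique (E : Type*) [NormedAddCommGroup E]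
    [InnerProductSpace ℝ E]
    (μ : E → ℝ) (hconv : ConvexOn ℝ Set.univ μ)
    (hhom : ∀ c : ℝ, 0 ≤ c → ∀ ξ : E, μ (c • ξ) = c * μ ξ)
    (m : ℝ) (hm : m < 0)
    (ξ₀ ξ₁ : E) (h₀ : ‖ξ₀‖ = 1) (h₁ : ‖ξ₁‖ = 1)
    (hμ₀ : μ ξ₀ = m) (hμ₁ : μ ξ₁ = m)
    (hinf : ∀ ξ : E, ‖ξ‖ = 1 → m ≤ μ ξ) :
    ξ₀ = ξ₁ := by
  -- midpoint
  set v : E := (1/2 : ℝ) • ξ₀ + (1/2 : ℝ) • ξ₁ with hv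
  have hconvv : μ v ≤ m := by
    have := hconv.2 (Set.mem_univ ξ₀) (Set.mem_univ ξ₁)
      (by norm_num : (0:ℝ) ≤ 1/2) (by norm_num : (0:ℝ) ≤ 1/2) (by norm_num)
    rw [hμ₀, hμ₁] at this
    calc μ v ≤ 1/2 * m + 1/2 * m := this
    _ = m := by ring
  have hvne : v ≠ 0 := by
    intro h
    have h0 : μ (0 : E) = 0 := by
      have := hhom 0 le_rfl 0
      simpa using this
    rw [h, h0] at hconvv
    linarith
  have hvnorm : (0:ℝ) < ‖v‖ := norm_pos_iff.mpr hvne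
  -- unit vector in direction v
  have hu : ‖(‖v‖⁻¹ : ℝ) • v‖ = 1 := by
    rw [norm_smul, norm_inv, norm_norm]
    field_simp
  have hmu : m ≤ μ ((‖v‖⁻¹ : ℝ) • v) := hinf _ hu
  have hμu : μ ((‖v‖⁻¹ : ℝ) • v) = ‖v‖⁻¹ * μ v :=
    hhom _ (by positivity) v
  -- so m ≤ ‖v‖⁻¹ * μ v ≤ ‖v‖⁻¹ * m, hence ‖v‖ ≥ 1
  have h1 : m ≤ ‖v‖⁻¹ * m := by
    calc m ≤ ‖v‖⁻¹ * μ v := by rw [← hμu]; exact hmu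
    _ ≤ ‖v‖⁻¹ * m := by
        apply mul_le_mul_of_nonneg_left hconvv (by positivity)
  have hge1 : (1:ℝ) ≤ ‖v‖ := by
    by_contra hlt
    push_neg at hlt
    have : (1:ℝ) < ‖v‖⁻¹ := (one_lt_inv₀ hvnorm).mpr hlt
    nlinarith
  -- so ‖ξ₀ + ξ₁‖ ≥ 2
  have hsum : (2:ℝ) ≤ ‖ξ₀ + ξ₁‖ := by
    have : v = (1/2 : ℝ) • (ξ₀ + ξ₁) := by rw [hv, smul_add]
    rw [this, norm_smul] at hge1
    simp only [norm_div, Real.norm_ofNat, norm_one] at hge1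
    norm_num at hge1
    linarith
  -- inner product argument
  have hinner : (1:ℝ) ≤ inner ℝ ξ₀ ξ₁ := by
    have hsq : (4:ℝ) ≤ ‖ξ₀ + ξ₁‖ ^ 2 := by nlinarith [norm_nonneg (ξ₀ + ξ₁)]
    have hexp : ‖ξ₀ + ξ₁‖ ^ 2 = 2 + 2 * inner ℝ ξ₀ ξ₁ := by
      rw [← real_inner_self_eq_norm_sq]
      rw [inner_add_add_self]
      rw [real_inner_self_eq_norm_sq, real_inner_self_eq_norm_sq, h₀, h₁,
        real_inner_comm ξ₁ ξ₀]
      ring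
    linarith [hexp ▸ hsq]
  have hdiff : ‖ξ₀ - ξ₁‖ ^ 2 ≤ 0 := by
    have : ‖ξ₀ - ξ₁‖ ^ 2 = 2 - 2 * inner ℝ ξ₀ ξ₁ := by
      rw [← real_inner_self_eq_norm_sq, inner_sub_sub_self,
        real_inner_self_eq_norm_sq, real_inner_self_eq_norm_sq, h₀, h₁,
        real_inner_comm ξ₁ ξ₀]
      ring
    linarith
  have : ξ₀ - ξ₁ = 0 := by
    have := sq_nonneg ‖ξ₀ - ξ₁‖
    have hz : ‖ξ₀ - ξ₁‖ = 0 := by nlinarith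
    exact norm_eq_zero.mp hz
  exact sub_eq_zero.mp this
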